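/- Let D be a Hermitian Dirac operator with zero diagonal on n vertices. For any two vertices i and j, the noncommutative distance d^D(i,j) is finite (equivalently, the set {|a(i)−a(j)| : ‖[D,π(a)]‖ ≤ 1} is bounded above) if and only if i and j lie in the same connected component of the graph G_D. -/

import Mathlib

open scoped ENNReal

/-- The operator norm on square matrices induced by the Euclidean (ℓ²) norm. -/
noncomputable def opNorm {ι : Type*} [Finite ι] (M : Matrix ι ι ℂ) : ℝ :=
  letI := Fintype.ofFinite ι
  letI := Classical.decEq ι
  ‖Matrix.toEuclideanCLM (𝕜 := ℂ) M‖

/-- The commutator `[D, π(a)]` of a matrix with the diagonal matrix of `a`. -/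
noncomputable def commD {ι : Type*} [Finite ι] (D : Matrix ι ι ℂ) (a : ι → ℂ) : Matrix ι ι ℂ :=
  letI := Fintype.ofFinite ι
  letI := Classical.decEq ι
  D * Matrix.diagonal a - Matrix.diagonal a * D

/-- Connes' noncommutative distance associated to the Dirac operator `D`. -/
noncomputable def ncDist {ι : Type*} [Finite ι] (D : Matrix ι ι ℂ) (i j : ι) : ℝ≥0∞ :=
  ⨆ (a : ι → ℂ) (_ : opNorm (commD D a) ≤ 1), ENNReal.ofReal ‖a i - a j‖

/-- The weight of an edge: the inverse of `|D i j|` (infinite if `D i j = 0`). -/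
noncomputable def eWeight {ι : Type*} (D : Matrix ι ι ℂ) (u v : ι) : ℝ≥0∞ :=
  (ENNReal.ofReal ‖D u v‖)⁻¹

/-- Adjacency in the graph `G_D`. -/
def Adjac {ι : Type*} (D : Matrix ι ι ℂ) (u v : ι) : Prop := u ≠ v ∧ D u v ≠ 0

/-- The length of a walk `i :: p` computed with weights `eWeight D`. -/
noncomputable def walkLength {ι : Type*} (D : Matrix ι ι ℂ) : ι → List ι → ℝ≥0∞
  | _, [] => 0
  | u, v :: rest => eWeight D u v + walkLength D v rest

/-- `i :: p` is a walk from `i` to `j` in the graph `G_D`. -/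
def IsWalk {ι : Type*} (D : Matrix ι ι ℂ) (i j : ι) (p : List ι) : Prop :=
  List.Chain (Adjac D) i p ∧ (i :: p).getLast (List.cons_ne_nil _ _) = j

/-- `i` and `j` lie in the same connected component of `G_D`. -/
def Conn {ι : Type*} (D : Matrix ι ι ℂ) (i j : ι) : Prop := ∃ p, IsWalk D i j p

/-- The geodesic (weighted shortest-path) distance on `G_D`. -/
noncomputable def gDist {ι : Type*} (D : Matrix ι ι ℂ) (i j : ι) : ℝ≥0∞ :=
  ⨅ (p : List ι) (_ : IsWalk D i j p), walkLength D i p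


lemma opNorm_eq {ι : Type*} [Fintype ι] [DecidableEq ι] (M : Matrix ι ι ℂ) :
    opNorm M = ‖Matrix.toEuclideanCLM (𝕜 := ℂ) M‖ := by
  unfold opNorm
  congr!

lemma commD_apply {ι : Type*} [Finite ι] (D : Matrix ι ι ℂ) (a : ι → ℂ) (u v : ι) :
    commD D a u v = D u v * (a v - a u) := by
  unfold commD
  simp [Matrix.sub_apply, Matrix.mul_diagonal, Matrix.diagonal_mul]
  ring

lemma entry_le_opNorm {ι : Type*} [Fintype ι] [DecidableEq ι] (M : Matrix ι ι ℂ) (u v : ι) :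
    ‖M u v‖ ≤ opNorm M := by
  rw [opNorm_eq]
  set T := Matrix.toEuclideanCLM (𝕜 := ℂ) M with hT
  have h2 : (T (EuclideanSpace.single v 1)) u = M u v := by
    rw [← EuclideanSpace.toLp_single, hT, Matrix.toEuclideanCLM_toLp]
    simp [Matrix.mulVec, dotProduct, Pi.single_apply]
  have h3 : ‖(T (EuclideanSpace.single v 1)) u‖ ≤ ‖T (EuclideanSpace.single v 1)‖ := by
    have := norm_inner_le_norm (𝕜 := ℂ) (EuclideanSpace.single u (1:ℂ)) (T (EuclideanSpace.single v 1))
    simpa [EuclideanSpace.inner_single_left, EuclideanSpace.norm_single] using this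
  have h4 : ‖T (EuclideanSpace.single v 1)‖ ≤ ‖T‖ := by
    have := T.le_opNorm (EuclideanSpace.single v 1)
    rwa [EuclideanSpace.norm_single, norm_one, mul_one] at this
  rw [← h2]; exact h3.trans h4

lemma chain_concat {α : Type*} {R : α → α → Prop} {c : α} :
    ∀ (p : List α) (i : α), List.Chain R i p →
      R ((i :: p).getLast (List.cons_ne_nil _ _)) c → List.Chain R i (p ++ [c])
  | [], i, _, h => List.Chain.cons h List.Chain.nil
  | v :: rest, i, hc, h => by
    obtain ⟨h1, h2⟩ := List.chain_cons.mp hc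
    rw [List.getLast_cons (List.cons_ne_nil _ _)] at h
    exact List.Chain.cons h1 (chain_concat rest v h2 h)

lemma conn_iff {ι : Type*} (D : Matrix ι ι ℂ) (i j : ι) :
    Conn D i j ↔ Relation.ReflTransGen (Adjac D) i j := by
  constructor
  · rintro ⟨p, hc, hl⟩
    induction p generalizing i with
    | nil => simp at hl; exact hl ▸ Relation.ReflTransGen.refl
    | cons v rest ih =>
      obtain ⟨hadj, hchain⟩ := List.chain_cons.mp hc
      rw [List.getLast_cons (List.cons_ne_nil _ _)] at hl
      exact (Relation.ReflTransGen.single hadj).trans (ih v hchain hl)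
  · intro h
    induction h with
    | refl => exact ⟨[], List.Chain.nil, rfl⟩
    | tail _ hadj ih =>
      rename_i b c _
      obtain ⟨p, hc, hl⟩ := ih
      refine ⟨p ++ [c], chain_concat p i hc (hl ▸ hadj), ?_⟩
      simp [List.getLast_append]

lemma edge_bound {ι : Type*} [Fintype ι] [DecidableEq ι] (D : Matrix ι ι ℂ) (a : ι → ℂ)
    (ha : opNorm (commD D a) ≤ 1) (u v : ι) (h : D u v ≠ 0) :
    ENNReal.ofReal ‖a u - a v‖ ≤ eWeight D u v := by
  have h1 : ‖D u v * (a v - a u)‖ ≤ 1 := by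
    rw [← commD_apply]; exact (entry_le_opNorm _ u v).trans ha
  have hpos : (0:ℝ) < ‖D u v‖ := norm_pos_iff.mpr h
  rw [norm_mul] at h1
  have h2 : ‖a v - a u‖ ≤ ‖D u v‖⁻¹ := by
    rw [← one_div, le_div_iff₀ hpos]
    linarith [h1]
  rw [norm_sub_rev]
  rw [eWeight, ← ENNReal.ofReal_inv_of_pos hpos]
  exact ENNReal.ofReal_le_ofReal h2

lemma walk_bound {ι : Type*} [Fintype ι] [DecidableEq ι] (D : Matrix ι ι ℂ) (a : ι → ℂ)
    (ha : opNorm (commD D a) ≤ 1) :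
    ∀ (p : List ι) (u : ι), List.Chain (Adjac D) u p →
      ENNReal.ofReal ‖a u - a ((u :: p).getLast (List.cons_ne_nil _ _))‖ ≤ walkLength D u p
  | [], u, _ => by simp [walkLength]
  | v :: rest, u, hc => by
    obtain ⟨h1, h2⟩ := List.chain_cons.mp hc
    rw [List.getLast_cons (List.cons_ne_nil _ _)]
    set w := (v :: rest).getLast (List.cons_ne_nil _ _) with hw
    calc ENNReal.ofReal ‖a u - a w‖
        ≤ ENNReal.ofReal (‖a u - a v‖ + ‖a v - a w‖) := by
          apply ENNReal.ofReal_le_ofReal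
          simpa using norm_add_le (a u - a v) (a v - a w)
      _ ≤ ENNReal.ofReal ‖a u - a v‖ + ENNReal.ofReal ‖a v - a w‖ := ENNReal.ofReal_add_le
      _ ≤ eWeight D u v + walkLength D v rest := by
          exact add_le_add (edge_bound D a ha u v h1.2) (walk_bound D a ha rest v h2)
      _ = walkLength D u (v :: rest) := rfl

lemma walkLength_ne_top {ι : Type*} (D : Matrix ι ι ℂ) :
    ∀ (p : List ι) (u : ι), List.Chain (Adjac D) u p → walkLength D u p ≠ ⊤
  | [], _, _ => by simp [walkLength]
  | v :: rest, u, hc => by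
    obtain ⟨h1, h2⟩ := List.chain_cons.mp hc
    have he : eWeight D u v ≠ ⊤ := by
      rw [eWeight, Ne, ENNReal.inv_eq_top, ENNReal.ofReal_eq_zero, not_le]
      exact norm_pos_iff.mpr h1.2
    exact ENNReal.add_ne_top.mpr ⟨he, walkLength_ne_top D rest v h2⟩


theorem stmt3 {n : ℕ} (D : Matrix (Fin n) (Fin n) ℂ)
    (hherm : D.IsHermitian) (hdiag : ∀ i, D i i = 0) (i j : Fin n) :
    ncDist D i j ≠ ⊤ ↔ Conn D i j := by
  constructor
  · contrapose!
    intro hconn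
    set S : Fin n → Prop := fun k => Relation.ReflTransGen (Adjac D) i k with hS
    classical
    have key : ∀ t : ℝ, 0 ≤ t → ENNReal.ofReal t ≤ ncDist D i j := by
      intro t ht
      set a : Fin n → ℂ := fun k => if S k then (t : ℂ) else 0 with hadef
      have hSiff : ∀ u v : Fin n, D u v ≠ 0 → u ≠ v → (S u ↔ S v) := by
        intro u v hD huv
        have hvu : D v u ≠ 0 := by
          have heq : D v u = star (D u v) := by
            rw [← congrFun (congrFun hherm v) u, Matrix.conjTranspose_apply]
          rw [heq]
          simpa using hD
        exact ⟨fun h => h.tail ⟨huv, hD⟩, fun h => h.tail ⟨Ne.symm huv, hvu⟩⟩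
      have hcomm : commD D a = 0 := by
        ext u v
        rw [commD_apply, Matrix.zero_apply]
        by_cases hD : D u v = 0
        · simp [hD]
        by_cases huv : u = v
        · simp [huv]
        have hiff := hSiff u v hD huv
        by_cases hu : S u
        · simp [hadef, hu, hiff.mp hu]
        · have hv : ¬ S v := fun h => hu (hiff.mpr h)
          simp [hadef, hu, hv]
      have hnorm : opNorm (commD D a) ≤ 1 := by
        rw [hcomm, opNorm_eq, map_zero, norm_zero]; exact zero_le_one
      have hSi : S i := Relation.ReflTransGen.refl
      have hSj : ¬ S j := fun h => hconn ((conn_iff D i j).mpr h)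
      have hval : ENNReal.ofReal ‖a i - a j‖ = ENNReal.ofReal t := by
        simp [hadef, hSi, hSj, Complex.norm_real, abs_of_nonneg ht]
      exact hval ▸ le_iSup₂_of_le a hnorm le_rfl
    by_contra hne
    have h2 : ncDist D i j < ENNReal.ofReal ((ncDist D i j).toReal + 1) := by
      conv_lhs => rw [← ENNReal.ofReal_toReal hne]
      exact ENNReal.ofReal_lt_ofReal_iff (by positivity) |>.mpr (lt_add_one _)
    exact absurd (key ((ncDist D i j).toReal + 1) (by positivity)) (not_le.mpr h2)
  · rintro ⟨p, hc, hl⟩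
    have hle : ncDist D i j ≤ walkLength D i p := by
      refine iSup₂_le fun a ha => ?_
      have := walk_bound D a ha p i hc
      rwa [hl] at this
    exact ne_top_of_le_ne_top (walkLength_ne_top D p i hc) hle
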